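/- Let ε be a real-valued random variable on a probability space whose distribution is symmetric (ε and −ε have the same law), and let r ∈ (1,2] with E|ε|^r < ∞. Then for all real numbers a ≥ 0 and b ≥ 0: E|a + bε|^r ≤ a^r + b^r·E|ε|^r. -/

import Mathlib

open MeasureTheory

-- real subadditivity of rpow for exponent ≤ 1
lemma rpow_subadd {s x y : ℝ} (hs0 : 0 ≤ s) (hs1 : s ≤ 1) (hx : 0 ≤ x) (hy : 0 ≤ y) :
    (x + y) ^ s ≤ x ^ s + y ^ s := by
  have h := NNReal.rpow_add_le_add_rpow x.toNNReal y.toNNReal hs0 hs1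
  have h2 := NNReal.coe_le_coe.2 h
  push_cast at h2
  rwa [Real.coe_toNNReal x hx, Real.coe_toNNReal y hy] at h2

-- key one-variable inequality
lemma keyT {r : ℝ} (hr1 : 1 < r) (hr2 : r ≤ 2) {t : ℝ} (ht0 : 0 ≤ t) (ht1 : t ≤ 1) :
    (1 + t) ^ r + (1 - t) ^ r ≤ 2 * (1 + t ^ r) := by
  set f : ℝ → ℝ := fun t => 2 * (1 + t ^ r) - (1 + t) ^ r - (1 - t) ^ r with hf
  have hd : ∀ x : ℝ, HasDerivAt f
      (2 * (r * x ^ (r - 1)) - 1 * r * (1 + x) ^ (r - 1) - (-1) * r * (1 - x) ^ (r - 1)) x := by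
    intro x
    have h1 : HasDerivAt (fun t : ℝ => t ^ r) (r * x ^ (r - 1)) x :=
      Real.hasDerivAt_rpow_const (Or.inr hr1.le)
    have h2 : HasDerivAt (fun t : ℝ => (1 + t) ^ r) (1 * r * (1 + x) ^ (r - 1)) x := by
      have := ((hasDerivAt_const x (1:ℝ)).add (hasDerivAt_id x)).rpow_const
        (p := r) (Or.inr hr1.le)
      simpa using this
    have h3 : HasDerivAt (fun t : ℝ => (1 - t) ^ r) ((-1) * r * (1 - x) ^ (r - 1)) x := by
      have := ((hasDerivAt_const x (1:ℝ)).sub (hasDerivAt_id x)).rpow_const (Or.inr hr1.le)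
      simpa using this
    have h0 : HasDerivAt (fun t : ℝ => 2 * (1 + t ^ r)) (2 * (r * x ^ (r - 1))) x := by
      simpa using (((hasDerivAt_const x (1:ℝ)).add h1).const_mul 2)
    exact (h0.sub h2).sub h3
  have hmono : MonotoneOn f (Set.Icc 0 1) := by
    apply monotoneOn_of_deriv_nonneg (convex_Icc 0 1)
    · exact fun x _ => ((hd x).differentiableAt).continuousAt.continuousWithinAt
    · exact fun x _ => ((hd x).differentiableAt).differentiableWithinAt
    · intro x hx
      rw [interior_Icc] at hx
      rw [(hd x).deriv]
      have hx0 : (0:ℝ) < x := hx.1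
      have hx1 : x < 1 := hx.2
      have hs0 : (0:ℝ) ≤ r - 1 := by linarith
      have hs1 : r - 1 ≤ 1 := by linarith
      have key : (1 + x) ^ (r - 1) ≤ (1 - x) ^ (r - 1) + 2 * x ^ (r - 1) := by
        have h1 : (1 + x : ℝ) = (1 - x) + 2 * x := by ring
        have h2 : ((1 - x) + 2 * x) ^ (r - 1) ≤ (1 - x) ^ (r - 1) + (2 * x) ^ (r - 1) :=
          rpow_subadd hs0 hs1 (by linarith) (by linarith)
        have h3 : (2 * x) ^ (r - 1) ≤ 2 * x ^ (r - 1) := by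
          rw [Real.mul_rpow (by norm_num) hx0.le]
          have : (2:ℝ) ^ (r - 1) ≤ 2 ^ (1:ℝ) :=
            Real.rpow_le_rpow_of_exponent_le (by norm_num) hs1
          rw [Real.rpow_one] at this
          have hxp : (0:ℝ) ≤ x ^ (r - 1) := Real.rpow_nonneg hx0.le _
          nlinarith
        calc (1 + x) ^ (r - 1) = ((1 - x) + 2 * x) ^ (r - 1) := by rw [← h1]
          _ ≤ (1 - x) ^ (r - 1) + (2 * x) ^ (r - 1) := h2
          _ ≤ (1 - x) ^ (r - 1) + 2 * x ^ (r - 1) := by linarith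
      nlinarith [hr1.le, key, mul_le_mul_of_nonneg_left key (by linarith : (0:ℝ) ≤ r)]
  have h0 : f 0 = 0 := by
    norm_num [hf, Real.zero_rpow (by linarith : r ≠ 0), Real.one_rpow]
  have := hmono (Set.mem_Icc.2 ⟨le_refl 0, by norm_num⟩) (Set.mem_Icc.2 ⟨ht0, ht1⟩) ht0
  rw [h0] at this
  simp only [hf] at this
  linarith

-- two-variable inequality, c ≤ a case
lemma keyA' {r : ℝ} (hr1 : 1 < r) (hr2 : r ≤ 2) {a c : ℝ} (hc : 0 ≤ c) (hca : c ≤ a) :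
    (a + c) ^ r + |a - c| ^ r ≤ 2 * (a ^ r + c ^ r) := by
  have ha : 0 ≤ a := hc.trans hca
  rcases eq_or_lt_of_le ha with h | hapos
  · have hc0 : c = 0 := le_antisymm (hca.trans h.symm.le) hc
    subst hc0
    rw [← h]
    simp [Real.zero_rpow (by linarith : r ≠ 0)]
  · set t := c / a with hT
    have ht0 : 0 ≤ t := div_nonneg hc hapos.le
    have ht1 : t ≤ 1 := (div_le_one hapos).2 hca
    have hct : c = a * t := by rw [hT, mul_div_assoc', eq_div_iff hapos.ne', mul_comm]
    have h1 : a + c = a * (1 + t) := by rw [hct]; ring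
    have h2 : a - c = a * (1 - t) := by rw [hct]; ring
    have habs : |a - c| = a * (1 - t) := by
      rw [h2, abs_of_nonneg (mul_nonneg hapos.le (by linarith))]
    rw [h1, habs, hct,
      Real.mul_rpow hapos.le (by linarith : (0:ℝ) ≤ 1 + t),
      Real.mul_rpow hapos.le (by linarith : (0:ℝ) ≤ 1 - t),
      Real.mul_rpow hapos.le ht0]
    have hk := keyT hr1 hr2 ht0 ht1
    have har : 0 ≤ a ^ r := Real.rpow_nonneg hapos.le _
    nlinarith
  
lemma keyA {r : ℝ} (hr1 : 1 < r) (hr2 : r ≤ 2) {a c : ℝ} (ha : 0 ≤ a) (hc : 0 ≤ c) :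
    (a + c) ^ r + |a - c| ^ r ≤ 2 * (a ^ r + c ^ r) := by
  rcases le_total c a with h | h
  · exact keyA' hr1 hr2 hc h
  · have := keyA' hr1 hr2 ha h
    rw [add_comm c a, abs_sub_comm c a] at this
    linarith

/-- If `ε` is a symmetric real random variable and `r ∈ (1,2]` with `E|ε|^r < ∞`, then
for all `a, b ≥ 0`: `E|a + bε|^r ≤ a^r + b^r E|ε|^r`. -/
theorem moment_bound_symmetric {Ω : Type*} [MeasurableSpace Ω]
    (P : Measure Ω) [IsProbabilityMeasure P]
    (ε : Ω → ℝ) (hε : Measurable ε)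
    (hsym : P.map ε = P.map (fun ω => -ε ω))
    (r : ℝ) (hr : r ∈ Set.Ioc (1 : ℝ) 2)
    (hint : Integrable (fun ω => |ε ω| ^ r) P)
    (a b : ℝ) (ha : 0 ≤ a) (hb : 0 ≤ b) :
    ∫ ω, |a + b * ε ω| ^ r ∂P ≤ a ^ r + b ^ r * ∫ ω, |ε ω| ^ r ∂P := by
  obtain ⟨hr1, hr2⟩ := hr
  have hr0 : (0:ℝ) ≤ r := by linarith
  -- continuity of the integrand as a function of x
  have hg : Continuous fun x : ℝ => |a + b * x| ^ r :=
    (continuous_abs.comp (by continuity)).rpow_const (fun x => Or.inr hr0)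
  -- symmetry: the two integrals agree
  have hmap : ∫ ω, |a + b * ε ω| ^ r ∂P = ∫ ω, |a - b * ε ω| ^ r ∂P := by
    calc ∫ ω, |a + b * ε ω| ^ r ∂P
        = ∫ x, |a + b * x| ^ r ∂(P.map ε) :=
          (integral_map hε.aemeasurable hg.aestronglyMeasurable).symm
      _ = ∫ x, |a + b * x| ^ r ∂(P.map fun ω => -ε ω) := by rw [hsym]
      _ = ∫ ω, |a + b * (-ε ω)| ^ r ∂P :=
          integral_map hε.neg.aemeasurable hg.aestronglyMeasurable
      _ = ∫ ω, |a - b * ε ω| ^ r ∂P := by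
          congr 1; funext ω; rw [mul_neg, ← sub_eq_add_neg]
  -- dominating function
  have hdom : Integrable (fun ω => 2 ^ r * (a ^ r + b ^ r * |ε ω| ^ r)) P :=
    (((integrable_const (a ^ r)).add (hint.const_mul (b ^ r))).const_mul (2 ^ r))
  have hbound : ∀ (c : ℝ) (x : ℝ), |c| ≤ a + b * |x| →
      |c| ^ r ≤ 2 ^ r * (a ^ r + b ^ r * |x| ^ r) := by
    intro c x hc
    have h1 : |c| ^ r ≤ (a + b * |x|) ^ r :=
      Real.rpow_le_rpow (abs_nonneg c) hc hr0
    have hbx : 0 ≤ b * |x| := mul_nonneg hb (abs_nonneg x)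
    have h2 : a + b * |x| ≤ 2 * max a (b * |x|) := by
      rcases le_total a (b * |x|) with h | h
      · rw [max_eq_right h]; linarith
      · rw [max_eq_left h]; linarith
    have h3 : (a + b * |x|) ^ r ≤ (2 * max a (b * |x|)) ^ r :=
      Real.rpow_le_rpow (by positivity) h2 hr0
    have h4 : (2 * max a (b * |x|)) ^ r = 2 ^ r * (max a (b * |x|)) ^ r :=
      Real.mul_rpow (by norm_num) (le_max_of_le_left ha)
    have h5 : (max a (b * |x|)) ^ r ≤ a ^ r + b ^ r * |x| ^ r := by
      have hbr : (b * |x|) ^ r = b ^ r * |x| ^ r := Real.mul_rpow hb (abs_nonneg x)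
      rcases le_total a (b * |x|) with h | h
      · rw [max_eq_right h, hbr]
        have : 0 ≤ a ^ r := Real.rpow_nonneg ha _
        linarith
      · rw [max_eq_left h]
        have : 0 ≤ b ^ r * |x| ^ r := by positivity
        linarith
    have h2r : (0:ℝ) ≤ 2 ^ r := Real.rpow_nonneg (by norm_num) _
    calc |c| ^ r ≤ (a + b * |x|) ^ r := h1
      _ ≤ 2 ^ r * (max a (b * |x|)) ^ r := by rw [← h4]; exact h3
      _ ≤ 2 ^ r * (a ^ r + b ^ r * |x| ^ r) := by nlinarith
  have hmeasp : AEStronglyMeasurable (fun ω => |a + b * ε ω| ^ r) P :=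
    (hg.measurable.comp hε).aestronglyMeasurable
  have hmeasm : AEStronglyMeasurable (fun ω => |a - b * ε ω| ^ r) P := by
    have : Continuous fun x : ℝ => |a - b * x| ^ r :=
      (continuous_abs.comp (by continuity)).rpow_const (fun x => Or.inr hr0)
    exact (this.measurable.comp hε).aestronglyMeasurable
  have hplus : Integrable (fun ω => |a + b * ε ω| ^ r) P := by
    refine hdom.mono' hmeasp (Filter.Eventually.of_forall fun ω => ?_)
    rw [Real.norm_eq_abs, abs_of_nonneg (Real.rpow_nonneg (abs_nonneg _) _)]
    refine hbound _ (ε ω) ?_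
    calc |a + b * ε ω| ≤ |a| + |b * ε ω| := abs_add_le _ _
      _ = a + b * |ε ω| := by rw [abs_of_nonneg ha, abs_mul, abs_of_nonneg hb]
  have hminus : Integrable (fun ω => |a - b * ε ω| ^ r) P := by
    refine hdom.mono' hmeasm (Filter.Eventually.of_forall fun ω => ?_)
    rw [Real.norm_eq_abs, abs_of_nonneg (Real.rpow_nonneg (abs_nonneg _) _)]
    refine hbound _ (ε ω) ?_
    calc |a - b * ε ω| ≤ |a| + |b * ε ω| := abs_sub _ _
      _ = a + b * |ε ω| := by rw [abs_of_nonneg ha, abs_mul, abs_of_nonneg hb]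
  -- pointwise key inequality
  have hpt : ∀ ω, |a + b * ε ω| ^ r + |a - b * ε ω| ^ r
      ≤ 2 * (a ^ r + b ^ r * |ε ω| ^ r) := by
    intro ω
    set x := ε ω with hx
    have hc : (0:ℝ) ≤ |b * x| := abs_nonneg _
    have hsum : |a + b * x| ^ r + |a - b * x| ^ r
        = (a + |b * x|) ^ r + (abs (a - |b * x|)) ^ r := by
      rcases le_total 0 (b * x) with h | h
      · rw [abs_of_nonneg h, abs_of_nonneg (by linarith : (0:ℝ) ≤ a + b * x)]
      · rw [abs_of_nonpos h]
        have h1 : a + b * x = a - -(b * x) := by ring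
        have h2 : a - b * x = a + -(b * x) := by ring
        rw [h1, h2, abs_of_nonneg (by linarith : (0:ℝ) ≤ a + -(b * x))]
        ring
    rw [hsum]
    have := keyA (hr1 := hr1) (hr2 := hr2) ha hc
    have hcr : |b * x| ^ r = b ^ r * |x| ^ r := by
      rw [abs_mul, abs_of_nonneg hb, Real.mul_rpow hb (abs_nonneg x)]
    linarith [this, hcr.le, hcr.ge]
  -- integrate
  have hintle : ∫ ω, (|a + b * ε ω| ^ r + |a - b * ε ω| ^ r) ∂P
      ≤ ∫ ω, 2 * (a ^ r + b ^ r * |ε ω| ^ r) ∂P := by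
    refine integral_mono (hplus.add hminus) ?_ hpt
    exact ((integrable_const (a ^ r)).add (hint.const_mul (b ^ r))).const_mul 2
  rw [integral_add hplus hminus, ← hmap] at hintle
  have hrhs : ∫ ω, 2 * (a ^ r + b ^ r * |ε ω| ^ r) ∂P
      = 2 * (a ^ r + b ^ r * ∫ ω, |ε ω| ^ r ∂P) := by
    rw [integral_const_mul, integral_add (integrable_const _) (hint.const_mul (b ^ r)),
      integral_const_mul, integral_const]
    simp
  rw [hrhs] at hintle
  linarith
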